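/- Let f and g be entire functions with f not identically zero. Then there exists an entire function h with g = f·h (pointwise) if and only if for every z ∈ ℂ the order of vanishing of f at z is less than or equal to the order of vanishing of g at z (in particular every zero of f is a zero of g of at least the same multiplicity). -/

import Mathlib

open Filter Topology

private lemma aux_order_le_mul {f h : ℂ → ℂ} {z₀ : ℂ} (hf : AnalyticAt ℂ f z₀)
    (hh : AnalyticAt ℂ h z₀) : analyticOrderAt f z₀ ≤ analyticOrderAt (f * h) z₀ := by
  rcases eq_or_ne (analyticOrderAt f z₀) ⊤ with htop | hne
  · have hev : ∀ᶠ z in 𝓝 z₀, f z = 0 := analyticOrderAt_eq_top.mp htop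
    have : analyticOrderAt (f * h) z₀ = ⊤ := by
      rw [analyticOrderAt_eq_top]
      filter_upwards [hev] with z hz
      simp [hz]
    simp [this]
  rcases eq_or_ne (analyticOrderAt h z₀) ⊤ with htop' | hne'
  · have hev : ∀ᶠ z in 𝓝 z₀, h z = 0 := analyticOrderAt_eq_top.mp htop'
    have : analyticOrderAt (f * h) z₀ = ⊤ := by
      rw [analyticOrderAt_eq_top]
      filter_upwards [hev] with z hz
      simp [hz]
    simp [this]
  obtain ⟨n, hn⟩ := WithTop.ne_top_iff_exists.mp hne
  obtain ⟨k, hk⟩ := WithTop.ne_top_iff_exists.mp hne'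
  obtain ⟨F, hF, hF0, hFe⟩ := (hf.analyticOrderAt_eq_natCast (n := n)).mp hn.symm
  obtain ⟨H, hH, hH0, hHe⟩ := (hh.analyticOrderAt_eq_natCast (n := k)).mp hk.symm
  have : analyticOrderAt (f * h) z₀ = ((n + k : ℕ) : ℕ∞) := by
    rw [(hf.mul hh).analyticOrderAt_eq_natCast]
    refine ⟨fun z => F z * H z, hF.mul hH, by simp [hF0, hH0], ?_⟩
    filter_upwards [hFe, hHe] with z h1 h2
    simp only [smul_eq_mul] at *
    rw [Pi.mul_apply, h1, h2, pow_add]; ring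
  rw [this, ← hn]
  exact ENat.coe_le_coe.mpr (Nat.le_add_right n k)

/-- For entire functions `f` and `g` with `f` not identically zero,
`g = f·h` for some entire `h` iff at every point the order of vanishing of `f` is at
most the order of vanishing of `g`. -/
theorem entire_dvd_iff_order_le (f g : ℂ → ℂ) (hf : Differentiable ℂ f)
    (hg : Differentiable ℂ g) (hf0 : f ≠ 0) :
    (∃ h : ℂ → ℂ, Differentiable ℂ h ∧ g = f * h) ↔
      ∀ z : ℂ, analyticOrderAt f z ≤ analyticOrderAt g z := by
  constructor
  · rintro ⟨h, hh, rfl⟩ z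
    exact aux_order_le_mul (hf.analyticAt z) (hh.analyticAt z)
  · intro hord
    rcases eq_or_ne g 0 with rfl | hg0
    · exact ⟨0, differentiable_const 0, by ext z; simp⟩
    -- g ≠ 0 : orders are finite everywhere
    have hfA : AnalyticOnNhd ℂ f Set.univ := fun z _ => hf.analyticAt z
    have hgA : AnalyticOnNhd ℂ g Set.univ := fun z _ => hg.analyticAt z
    have h0A : AnalyticOnNhd ℂ (0 : ℂ → ℂ) Set.univ := fun z _ => analyticAt_const
    have hford : ∀ z : ℂ, analyticOrderAt f z ≠ ⊤ := by
      intro z htop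
      have hev := analyticOrderAt_eq_top.mp htop
      exact hf0 (hfA.eq_of_frequently_eq h0A
        ((hev.filter_mono nhdsWithin_le_nhds).frequently))
    have hgord : ∀ z : ℂ, analyticOrderAt g z ≠ ⊤ := by
      intro z htop
      have hev := analyticOrderAt_eq_top.mp htop
      exact hg0 (hgA.eq_of_frequently_eq h0A
        ((hev.filter_mono nhdsWithin_le_nhds).frequently))
    -- the candidate quotient
    set h : ℂ → ℂ := fun z => limUnder (𝓝[≠] z) (fun w => g w / f w) with hdef
    -- key local fact
    have key : ∀ z₀ : ℂ, ∃ q : ℂ → ℂ, AnalyticAt ℂ q z₀ ∧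
        (∀ᶠ w in 𝓝 z₀, h w = q w) ∧ (∀ᶠ w in 𝓝 z₀, g w = f w * q w) := by
      intro z₀
      obtain ⟨n, hn⟩ := WithTop.ne_top_iff_exists.mp (hford z₀)
      obtain ⟨m, hm⟩ := WithTop.ne_top_iff_exists.mp (hgord z₀)
      have hnm : n ≤ m := by
        have := hord z₀
        rw [← hn, ← hm] at this
        exact ENat.coe_le_coe.mp this
      obtain ⟨F, hFa, hF0, hFe⟩ := ((hf.analyticAt z₀).analyticOrderAt_eq_natCast (n := n)).mp hn.symm
      obtain ⟨G, hGa, hG0, hGe⟩ := ((hg.analyticAt z₀).analyticOrderAt_eq_natCast (n := m)).mp hm.symm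
      refine ⟨fun w => (w - z₀) ^ (m - n) * G w / F w, ?_, ?_, ?_⟩
      · exact (((analyticAt_id.sub analyticAt_const).pow _).mul hGa).div hFa hF0
      · -- h = q eventually
        have hev : ∀ᶠ w in 𝓝 z₀, f w = (w - z₀) ^ n * F w ∧ g w = (w - z₀) ^ m * G w ∧
            F w ≠ 0 ∧ AnalyticAt ℂ (fun w => (w - z₀) ^ (m - n) * G w / F w) w := by
          filter_upwards [hFe, hGe, hFa.continuousAt.eventually_ne hF0,
            ((((analyticAt_id.sub analyticAt_const).pow _).mul hGa).div hFa
              hF0).eventually_analyticAt] with w h1 h2 h3 h4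
          exact ⟨by simpa using h1, by simpa using h2, h3, h4⟩
        rw [eventually_nhds_iff] at hev ⊢
        obtain ⟨U, hU, hUo, hz₀U⟩ := hev
        refine ⟨U, fun w hw => ?_, hUo, hz₀U⟩
        -- show h w = q w
        have hq : ∀ w' ∈ U, w' ≠ z₀ → g w' / f w' = (w' - z₀) ^ (m - n) * G w' / F w' := by
          intro w' hw' hne
          obtain ⟨e1, e2, e3, -⟩ := hU w' hw'
          have hsub : w' - z₀ ≠ 0 := sub_ne_zero.mpr hne
          rw [e1, e2, ← pow_sub_mul_pow (w' - z₀) hnm]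
          field_simp
        have hUw : ∀ᶠ w' in 𝓝[≠] w, w' ∈ U ∧ w' ≠ z₀ := by
          rcases eq_or_ne w z₀ with rfl | hwz
          · filter_upwards [eventually_nhdsWithin_of_eventually_nhds
              (hUo.mem_nhds hw), self_mem_nhdsWithin] with w' h1 h2
            exact ⟨h1, h2⟩
          · have : ∀ᶠ w' in 𝓝 w, w' ∈ U ∧ w' ≠ z₀ :=
              (hUo.eventually_mem hw).and (eventually_ne_nhds hwz)
            exact eventually_nhdsWithin_of_eventually_nhds this
        obtain ⟨-, -, -, hqA⟩ := hU w hw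
        have htend : Tendsto (fun w' => g w' / f w') (𝓝[≠] w)
            (𝓝 ((w - z₀) ^ (m - n) * G w / F w)) := by
          refine Tendsto.congr' ?_ (hqA.continuousAt.continuousWithinAt.tendsto)
          filter_upwards [hUw] with w' ⟨h1, h2⟩
          exact (hq w' h1 h2).symm
        exact htend.limUnder_eq
      · -- g = f * q eventually
        filter_upwards [hFe, hGe, hFa.continuousAt.eventually_ne hF0] with w h1 h2 h3
        simp only [smul_eq_mul] at h1 h2
        rw [h1, h2]
        field_simp
        rw [← pow_sub_mul_pow (w - z₀) hnm]
        ring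
    refine ⟨h, ?_, ?_⟩
    · intro z₀
      obtain ⟨q, hqa, hhq, -⟩ := key z₀
      exact (Filter.EventuallyEq.differentiableAt_iff hhq).mpr hqa.differentiableAt
    · funext z₀
      obtain ⟨q, -, hhq, hgq⟩ := key z₀
      have h1 := hhq.self_of_nhds
      have h2 := hgq.self_of_nhds
      simp only [Pi.mul_apply, h2, h1]
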